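/- arXiv:2101.08110 — 2 statements merged into one kernel-verified Lean document; each statement's English description precedes it below -/
import Mathlib

section
/- Let p₀, …, p_r ∈ ℂ be pairwise distinct and g a function on {p₀,…,p_r}. Then g has a polynomial interpolant of degree at most d (where d ≤ r) if and only if for every polynomial h of degree at most r − d − 1, the r-th divided difference of the product satisfies (g·h)[p₀,…,p_r] = 0. -/
open Polynomial Finset

/-- The k-th divided difference f[p₀,…,p_k] for pairwise distinct nodes. -/
noncomputable def divDiff (f : ℂ → ℂ) (p : ℕ → ℂ) (k : ℕ) : ℂ :=
  ∑ j ∈ Finset.range (k+1),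
    f (p j) / ∏ i ∈ (Finset.range (k+1)).erase j, (p j - p i)

lemma basis_coeff (s : Finset ℕ) (v : ℕ → ℂ) (hv : Set.InjOn v s) {j : ℕ} (hj : j ∈ s) :
    (Lagrange.basis s v j).coeff (s.card - 1) = (∏ i ∈ s.erase j, (v j - v i))⁻¹ := by
  have hnd := Lagrange.natDegree_basis hv hj
  rw [← hnd, Polynomial.coeff_natDegree, Lagrange.basis, Polynomial.leadingCoeff_prod]
  rw [← Finset.prod_inv_distrib]
  refine Finset.prod_congr rfl fun i hi => ?_
  have hne : v j ≠ v i := by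
    intro h
    exact (Finset.mem_erase.mp hi).1 (hv (Finset.mem_of_mem_erase hi) hj h.symm)
  rw [Lagrange.basisDivisor, leadingCoeff_mul, leadingCoeff_C, leadingCoeff_X_sub_C, mul_one]

lemma lemA (s : Finset ℕ) (v : ℕ → ℂ) (hv : Set.InjOn v s) (q : Polynomial ℂ)
    (hq : q.degree < s.card) :
    ∑ j ∈ s, q.eval (v j) / ∏ i ∈ s.erase j, (v j - v i) = q.coeff (s.card - 1) := by
  conv_rhs => rw [Lagrange.eq_interpolate hv hq]
  rw [Lagrange.interpolate_apply, Polynomial.finset_sum_coeff]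
  refine Finset.sum_congr rfl fun j hj => ?_
  rw [Polynomial.coeff_C_mul, basis_coeff s v hv hj, div_eq_mul_inv]

/-- g has a polynomial interpolant of degree at most d (d ≤ r) iff
(g·h)[p₀,…,p_r] = 0 for all polynomials h of degree at most r − d − 1. -/
theorem stmt_7 (r d : ℕ) (hd : d ≤ r) (p : ℕ → ℂ)
    (hp : ∀ i ≤ r, ∀ j ≤ r, p i = p j → i = j) (g : ℂ → ℂ) :
    (∃ G : Polynomial ℂ, G.natDegree ≤ d ∧ ∀ j ≤ r, G.eval (p j) = g (p j)) ↔
    ∀ h : Polynomial ℂ, h.degree < ((r - d : ℕ) : WithBot ℕ) →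
      divDiff (fun z => g z * h.eval z) p r = 0 := by
  have hinj : ∀ s : Finset ℕ, (∀ i ∈ s, i ≤ r) → Set.InjOn p s := by
    intro s hs i hi j hj hij
    exact hp i (hs i (by exact_mod_cast hi)) j (hs j (by exact_mod_cast hj)) hij
  constructor
  · rintro ⟨G, hGd, hGval⟩ h hh
    by_cases hz : h = 0
    · subst hz
      simp [divDiff]
    · have hrd : 1 ≤ r - d := by
        rcases Nat.eq_zero_or_pos (r - d) with h0 | h1
        · exfalso
          rw [h0, Nat.cast_zero] at hh
          exact hz (Polynomial.degree_eq_bot.mp (Nat.WithBot.lt_zero_iff.mp hh))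
        · exact h1
      have hhn : h.natDegree ≤ r - d - 1 := by
        have h2 : (h.natDegree : WithBot ℕ) < ((r - d : ℕ) : WithBot ℕ) :=
          (Polynomial.degree_eq_natDegree hz) ▸ hh
        have h3 : h.natDegree < r - d := by exact_mod_cast h2
        omega
      have hq : (G * h).natDegree ≤ r - 1 :=
        (Polynomial.natDegree_mul_le).trans (by omega)
      unfold divDiff
      have hcongr : ∀ j ∈ Finset.range (r+1),
          (fun z => g z * h.eval z) (p j) / ∏ i ∈ (Finset.range (r+1)).erase j, (p j - p i)
          = (G * h).eval (p j) / ∏ i ∈ (Finset.range (r+1)).erase j, (p j - p i) := by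
        intro j hj
        rw [Polynomial.eval_mul, hGval j (by simpa [Nat.lt_succ_iff] using hj)]
      rw [Finset.sum_congr rfl hcongr,
        lemA _ p (hinj _ (by simp [Nat.lt_succ_iff])) _ (by
          refine (Polynomial.degree_le_natDegree).trans_lt ?_
          rw [Finset.card_range]
          exact_mod_cast (by omega : (G*h).natDegree < r + 1))]
      rw [Finset.card_range]
      exact Polynomial.coeff_eq_zero_of_natDegree_lt (by omega)
  · intro H
    set s₀ : Finset ℕ := Finset.Icc (r - d) r with hs₀
    have hcard₀ : s₀.card = d + 1 := by rw [hs₀, Nat.card_Icc]; omega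
    set G : Polynomial ℂ := Lagrange.interpolate s₀ p (fun j => g (p j)) with hG
    have hinj₀ : Set.InjOn p s₀ := hinj s₀ (by simp [hs₀])
    have hGdeg : G.natDegree ≤ d := by
      have := Lagrange.degree_interpolate_le (fun j => g (p j)) hinj₀
      rw [hcard₀] at this
      exact Polynomial.natDegree_le_iff_degree_le.mpr (by rw [hG]; simpa using this)
    -- key sums vanish
    have hS : ∀ k, k < r - d →
        ∑ j ∈ Finset.Icc k r, g (p j) / ∏ i ∈ (Finset.Icc k r).erase j, (p j - p i) = 0 := by
      intro k hk
      have hkr : k ≤ r := by omega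
      set ω : Polynomial ℂ := ∏ i ∈ Finset.range k, (Polynomial.X - Polynomial.C (p i)) with hω
      have hωdeg : ω.degree = (k : WithBot ℕ) := by
        rw [hω, Polynomial.degree_prod]
        simp [Polynomial.degree_X_sub_C]
      have hHω := H ω (by rw [hωdeg]; exact_mod_cast hk)
      unfold divDiff at hHω
      rw [show Finset.range (r+1) = Finset.range k ∪ Finset.Icc k r by
            ext i; simp [Finset.mem_range, Finset.mem_Icc]; omega,
        Finset.sum_union (by simp [Finset.disjoint_left, Finset.mem_range, Finset.mem_Icc]; omega)]
        at hHω
      have h1 : ∀ j ∈ Finset.range k,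
          (fun z => g z * ω.eval z) (p j) /
            ∏ i ∈ ((Finset.range k ∪ Finset.Icc k r)).erase j, (p j - p i) = 0 := by
        intro j hj
        have : ω.eval (p j) = 0 := by
          rw [hω, Polynomial.eval_prod]
          exact Finset.prod_eq_zero hj (by simp)
        simp [this]
      rw [Finset.sum_eq_zero h1, zero_add] at hHω
      rw [← hHω]
      refine (Finset.sum_congr rfl fun j hj => ?_).symm
      have hjk : k ≤ j ∧ j ≤ r := Finset.mem_Icc.mp hj
      have hsplit : (Finset.range k ∪ Finset.Icc k r).erase j
          = Finset.range k ∪ (Finset.Icc k r).erase j := by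
        ext i
        simp only [Finset.mem_erase, Finset.mem_union, Finset.mem_range, Finset.mem_Icc]
        omega
      have hdisj : Disjoint (Finset.range k) ((Finset.Icc k r).erase j) := by
        simp only [Finset.disjoint_left, Finset.mem_range, Finset.mem_erase, Finset.mem_Icc]
        omega
      rw [hsplit, Finset.prod_union hdisj]
      have hevalω : ω.eval (p j) = ∏ i ∈ Finset.range k, (p j - p i) := by
        rw [hω, Polynomial.eval_prod]; simp
      have hA : (∏ i ∈ Finset.range k, (p j - p i)) ≠ 0 := by
        refine Finset.prod_ne_zero_iff.mpr fun i hi => ?_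
        have hik : i < k := Finset.mem_range.mp hi
        refine sub_ne_zero_of_ne fun hpe => ?_
        have := hp j hjk.2 i (by omega) hpe
        omega
      simp only [hevalω]
      rw [mul_comm (∏ i ∈ Finset.range k, (p j - p i)) (∏ i ∈ (Finset.Icc k r).erase j, (p j - p i)),
        mul_div_mul_right _ _ hA]
    -- downward induction
    have key : ∀ m, ∀ k, k ≤ r → r - k ≤ m → G.eval (p k) = g (p k) := by
      intro m
      induction m with
      | zero =>
        intro k hk hm
        have : k = r := by omega
        subst this
        exact Lagrange.eval_interpolate_at_node _ hinj₀ (Finset.mem_Icc.mpr (by omega))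
      | succ m ih =>
        intro k hk hm
        by_cases hnode : r - d ≤ k
        · exact Lagrange.eval_interpolate_at_node _ hinj₀ (Finset.mem_Icc.mpr (by omega))
        · push_neg at hnode
          have h0 := hS k hnode
          have hcardk : (Finset.Icc k r).card = r - k + 1 := by rw [Nat.card_Icc]; omega
          have hG0 : ∑ j ∈ Finset.Icc k r, G.eval (p j) /
              ∏ i ∈ (Finset.Icc k r).erase j, (p j - p i) = 0 := by
            rw [lemA _ p (hinj _ (fun i hi => (Finset.mem_Icc.mp hi).2)) G (by
              refine (Polynomial.degree_le_natDegree).trans_lt ?_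
              rw [hcardk]
              exact_mod_cast (by omega : G.natDegree < r - k + 1)), hcardk]
            exact Polynomial.coeff_eq_zero_of_natDegree_lt (by omega)
          have hsub : ∑ j ∈ Finset.Icc k r, (g (p j) - G.eval (p j)) /
              ∏ i ∈ (Finset.Icc k r).erase j, (p j - p i) = 0 := by
            simp only [sub_div]
            rw [Finset.sum_sub_distrib, h0, hG0, sub_zero]
          rw [Finset.sum_eq_single_of_mem k (by simp [Finset.mem_Icc]; omega)
            (fun j hj hjk => by
              have hjm := Finset.mem_Icc.mp hj
              rw [ih j hjm.2 (by omega)]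
              simp)] at hsub
          have hD : (∏ i ∈ (Finset.Icc k r).erase k, (p k - p i)) ≠ 0 := by
            refine Finset.prod_ne_zero_iff.mpr fun i hi => ?_
            have him := Finset.mem_erase.mp hi
            have hii := Finset.mem_Icc.mp him.2
            refine sub_ne_zero_of_ne fun hpe => ?_
            exact him.1 (hp k hk i hii.2 hpe).symm
          have := (div_eq_zero_iff.mp hsub).resolve_right hD
          exact (sub_eq_zero.mp this).symm
    exact ⟨G, hGdeg, fun j hj => key r j hj (by omega)⟩
end

section
/- Let q = ∏_{j=0}^r (ζ − p_j) with the p_j not necessarily distinct, and let g ∈ ℂ[ζ]/(q). Define the generalized divided difference g[p₀,…,p_r] as the coefficient of ζ^r in the unique representative polynomial of g of degree at most r. Then g has a polynomial interpolant (i.e., a representative) of degree at most d if and only if (g·h)[p₀,…,p_r] = 0 for all polynomials h with deg h ≤ r − d − 1, where g·h is the product in ℂ[ζ]/(q). -/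
/-- For q = ∏_{j=0}^r (ζ − p_j) (nodes not necessarily distinct), define the
generalized divided difference of a class mod q as the ζ^r-coefficient of its
unique representative of degree ≤ r (the remainder on division by the monic q).
Then g has a representative of degree ≤ d iff (g·h)[p₀,…,p_r] = 0 for all
polynomials h of degree ≤ r − d − 1. -/
theorem stmt_18 (r d : ℕ) (hd : d ≤ r) (p : ℕ → ℂ) (g : Polynomial ℂ) :
    (∃ G : Polynomial ℂ, G.natDegree ≤ d ∧
      (∏ j ∈ Finset.range (r+1), (Polynomial.X - Polynomial.C (p j))) ∣ (G - g)) ↔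
    ∀ h : Polynomial ℂ, h.degree < ((r - d : ℕ) : WithBot ℕ) →
      ((g * h) %ₘ ∏ j ∈ Finset.range (r+1),
        (Polynomial.X - Polynomial.C (p j))).coeff r = 0 := by
  classical
  open Polynomial in
  set q : Polynomial ℂ := ∏ j ∈ Finset.range (r+1), (X - C (p j)) with hq
  have hmonic : q.Monic := monic_prod_of_monic _ _ (fun j _ => monic_X_sub_C _)
  have hdegq : q.degree = ((r+1 : ℕ) : WithBot ℕ) := by
    rw [hq, Polynomial.degree_prod]
    simp [Polynomial.degree_X_sub_C]
  constructor
  · rintro ⟨G, hG, hdvd⟩ h hh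
    by_cases h0 : h = 0
    · simp [h0, Polynomial.zero_modByMonic]
    · have hhn : h.natDegree < r - d := by
        rw [Polynomial.natDegree_lt_iff_degree_lt h0]
        exact_mod_cast hh
      have hmod : (g * h) %ₘ q = (G * h) %ₘ q := by
        apply Polynomial.modByMonic_eq_of_dvd_sub hmonic
        have : g * h - G * h = -(G - g) * h := by ring
        rw [this]
        exact Dvd.dvd.mul_right (dvd_neg.mpr hdvd) h
      have hnd : (G * h).natDegree < r := by
        calc (G * h).natDegree ≤ G.natDegree + h.natDegree := Polynomial.natDegree_mul_le
        _ < d + (r - d) := by omega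
        _ = r := by omega
      have hlt : (G * h).degree < q.degree := by
        rw [hdegq]
        calc (G * h).degree ≤ ((G * h).natDegree : WithBot ℕ) := Polynomial.degree_le_natDegree
        _ < ((r + 1 : ℕ) : WithBot ℕ) := by exact_mod_cast Nat.lt_succ_of_lt hnd
      rw [hmod, (Polynomial.modByMonic_eq_self_iff hmonic).mpr hlt]
      exact Polynomial.coeff_eq_zero_of_natDegree_lt hnd
  · intro H
    set R := g %ₘ q with hR
    have hRlt : R.degree < q.degree := Polynomial.degree_modByMonic_lt g hmonic
    have hRnat : R.natDegree ≤ r := by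
      by_cases hR0 : R = 0
      · simp [hR0]
      · have := (Polynomial.natDegree_lt_iff_degree_lt hR0 (n := r + 1)).mpr
          (by rw [← hdegq]; exact hRlt)
        omega
    have hsub : g - R = q * (g /ₘ q) := by
      have h1 : R + q * (g /ₘ q) = g := Polynomial.modByMonic_add_div g q
      exact (eq_sub_of_add_eq' h1).symm
    have key : ∀ k, k < r - d → R.coeff (r - k) = 0 := by
      intro k
      induction k using Nat.strong_induction_on with
      | _ k ih =>
        intro hk
        have hRk : R.natDegree ≤ r - k := by
          rw [Polynomial.natDegree_le_iff_coeff_eq_zero]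
          intro m hm
          by_cases hmr : m ≤ r
          · have hmeq : m = r - (r - m) := by omega
            rw [hmeq]
            exact ih (r - m) (by omega) (by omega)
          · exact Polynomial.coeff_eq_zero_of_natDegree_lt (by omega)
        have hhX : (X ^ k : Polynomial ℂ).degree < ((r - d : ℕ) : WithBot ℕ) := by
          rw [Polynomial.degree_X_pow]
          exact_mod_cast hk
        have hmod : (g * X ^ k) %ₘ q = (R * X ^ k) %ₘ q := by
          apply Polynomial.modByMonic_eq_of_dvd_sub hmonic
          have : g * X ^ k - R * X ^ k = (g - R) * X ^ k := by ring
          rw [this, hsub]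
          exact Dvd.dvd.mul_right (Dvd.intro _ rfl) _
        have hself : (R * X ^ k) %ₘ q = R * X ^ k := by
          apply (Polynomial.modByMonic_eq_self_iff hmonic).mpr
          rw [hdegq]
          calc (R * X ^ k).degree ≤ ((R * X ^ k).natDegree : WithBot ℕ) :=
              Polynomial.degree_le_natDegree
          _ ≤ ((r : ℕ) : WithBot ℕ) := by
              have : (R * X ^ k).natDegree ≤ R.natDegree + k := by
                calc (R * X ^ k).natDegree ≤ R.natDegree + (X ^ k : Polynomial ℂ).natDegree :=
                    Polynomial.natDegree_mul_le
                _ = R.natDegree + k := by rw [Polynomial.natDegree_X_pow]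
              exact_mod_cast (by omega : (R * X ^ k).natDegree ≤ r)
          _ < ((r + 1 : ℕ) : WithBot ℕ) := by exact_mod_cast Nat.lt_succ_self r
        have hres := H (X ^ k) hhX
        rw [hmod, hself] at hres
        have hrk : r = (r - k) + k := by omega
        rw [hrk, Polynomial.coeff_mul_X_pow] at hres
        exact hres
    refine ⟨R, ?_, ?_⟩
    · rw [Polynomial.natDegree_le_iff_coeff_eq_zero]
      intro m hm
      by_cases hmr : m ≤ r
      · have hmeq : m = r - (r - m) := by omega
        rw [hmeq]
        exact key (r - m) (by omega)
      · exact Polynomial.coeff_eq_zero_of_natDegree_lt (by omega)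
    · have : R - g = q * (-(g /ₘ q)) := by rw [mul_neg, ← hsub]; ring
      exact ⟨_, this⟩
end
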